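/- For every finite quantum score S on Dens(n) there exists a projective finite quantum score S' = (s', μ') — i.e., one for which every μ'(ρ') is a projection-valued measurement, a POVM whose elements are pairwise orthogonal orthogonal projections — such that S'(ρ'; ρ) = S(ρ'; ρ) for all ρ, ρ' ∈ Dens(n). -/

import Mathlib

open Matrix BigOperators ComplexOrder

noncomputable section

/-- The space of `n × n` complex matrices. -/
abbrev Mat (n : ℕ) := Matrix (Fin n) (Fin n) ℂ

/-- The set of density matrices on ℂⁿ: positive semidefinite with trace 1. -/
def Dens (n : ℕ) : Set (Mat n) := {ρ | ρ.PosSemidef ∧ ρ.trace = 1}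

/-- Real inner product on (Hermitian) matrices: ⟨A,B⟩ = Tr(AB) (real part). -/
def hip {n : ℕ} (A B : Mat n) : ℝ := ((A * B).trace).re

/-- A POVM with finite outcome set `Y`. -/
def IsPOVM {n : ℕ} {Y : Type*} [Fintype Y] (μ : Y → Mat n) : Prop :=
  (∀ y, (μ y).PosSemidef) ∧ ∑ y, μ y = 1

/-- A projection-valued measurement. -/
def IsPVM {n : ℕ} {Y : Type*} [Fintype Y] (μ : Y → Mat n) : Prop :=
  IsPOVM μ ∧ (∀ y, (μ y).IsHermitian ∧ μ y * μ y = μ y) ∧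
    ∀ y y', y ≠ y' → μ y * μ y' = 0

/-- Expected score of a quantum score with report type `R`. -/
def expScoreR {n : ℕ} {R : Type*} {Y : Type*} [Fintype Y]
    (s : R → Y → ℝ) (μ : R → Y → Mat n) (r : R) (ρ : Mat n) : ℝ :=
  ∑ y, hip (μ r y) ρ * s r y

/-- Truthfulness of a quantum score. -/
def Truthful {n : ℕ} {Y : Type*} [Fintype Y]
    (s : Mat n → Y → ℝ) (μ : Mat n → Y → Mat n) : Prop :=
  ∀ ρ ∈ Dens n, ∀ ρ' ∈ Dens n, expScoreR s μ ρ' ρ ≤ expScoreR s μ ρ ρ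

/-- Strict truthfulness of a quantum score. -/
def StrictlyTruthful {n : ℕ} {Y : Type*} [Fintype Y]
    (s : Mat n → Y → ℝ) (μ : Mat n → Y → Mat n) : Prop :=
  Truthful s μ ∧ ∀ ρ ∈ Dens n, ∀ ρ' ∈ Dens n,
    expScoreR s μ ρ' ρ = expScoreR s μ ρ ρ → ρ' = ρ

/-- `d` is a (Hermitian-matrix) subgradient of `F` at `ρ` relative to `Dens n`. -/
def IsQSubgrad {n : ℕ} (F : Mat n → ℝ) (ρ d : Mat n) : Prop :=
  ∀ τ ∈ Dens n, F ρ + hip d (τ - ρ) ≤ F τ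

/-- `d` is a subgradient of `f` at `p` relative to `P ⊆ ℝ^Y`. -/
def IsCSubgrad {Y : Type*} [Fintype Y] (P : Set (Y → ℝ)) (f : (Y → ℝ) → ℝ)
    (p d : Y → ℝ) : Prop :=
  ∀ q ∈ P, f p + ∑ y, d y * (q y - p y) ≤ f q

/-- A POVM is tomographically complete if the real span of its elements is
the set of Hermitian matrices. -/
def TomoComplete {n : ℕ} {Y : Type*} [Fintype Y] (μ : Y → Mat n) : Prop :=
  ∀ X : Mat n, X.IsHermitian ↔ X ∈ Submodule.span ℝ (Set.range μ)

/-- The eigenvalues of a Hermitian matrix, in non-increasing order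
(junk value `0` on non-Hermitian matrices). -/
def eigs {n : ℕ} (ρ : Mat n) : Fin n → ℝ :=
  if h : ρ.IsHermitian then
    fun i => (h.eigenvalues ∘ (Tuple.sort h.eigenvalues)) i.rev
  else 0

/-- The outer product `v v*`. -/
def outer {n : ℕ} (v : Fin n → ℂ) : Mat n := Matrix.vecMulVec v (star v)

/-- A family of orthonormal vectors in ℂⁿ. -/
def ONFam {n k : ℕ} (x : Fin k → Fin n → ℂ) : Prop :=
  ∀ i j, ∑ m, (starRingEnd ℂ) (x i m) * x j m = if i = j then 1 else 0

/-- `x` is a spectral decomposition of `ρ` (with eigenvalues in non-increasing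
order `eigs ρ`). -/
def IsSpecDecomp {n : ℕ} (ρ : Mat n) (x : Fin n → Fin n → ℂ) : Prop :=
  ONFam x ∧ ρ = ∑ y, (eigs ρ y : ℂ) • outer (x y)

/-- Expected classical score `ŝ(q; p)`. -/
def cExp {n : ℕ} (s : (Fin n → ℝ) → Fin n → ℝ) (q p : Fin n → ℝ) : ℝ :=
  ∑ y, p y * s q y

/-- Properness of a classical scoring rule. -/
def Proper {n : ℕ} (s : (Fin n → ℝ) → Fin n → ℝ) : Prop :=
  ∀ p ∈ stdSimplex ℝ (Fin n), ∀ q ∈ stdSimplex ℝ (Fin n), cExp s q p ≤ cExp s p p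

/-- Strict properness of a classical scoring rule. -/
def StrictlyProper {n : ℕ} (s : (Fin n → ℝ) → Fin n → ℝ) : Prop :=
  Proper s ∧ ∀ p ∈ stdSimplex ℝ (Fin n), ∀ q ∈ stdSimplex ℝ (Fin n),
    cExp s q p = cExp s p p → q = p

/-- Permutation invariance of a classical scoring rule: `ŝ(p, y) = ŝ(πp, π y)`
where `(πp)_y = p_{π y}`. -/
def PermInv {n : ℕ} (s : (Fin n → ℝ) → Fin n → ℝ) : Prop :=
  ∀ (π : Equiv.Perm (Fin n)) (p : Fin n → ℝ) (y : Fin n), s p y = s (p ∘ π) (π y)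

/-- Expected spectral score `S[ŝ](ρ'; ρ)` computed using the spectral
decomposition `x` of the report `ρ'`. -/
def specExp {n : ℕ} (s : (Fin n → ℝ) → Fin n → ℝ) (x : Fin n → Fin n → ℂ)
    (ρ' ρ : Mat n) : ℝ :=
  ∑ y, hip (outer (x y)) ρ * s (eigs ρ') y

/-- Truthfulness of the spectral score `S[ŝ]`. -/
def SpecTruthful {n : ℕ} (s : (Fin n → ℝ) → Fin n → ℝ) : Prop :=
  ∀ ρ ∈ Dens n, ∀ ρ' ∈ Dens n, ∀ x z, IsSpecDecomp ρ' x → IsSpecDecomp ρ z →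
    specExp s x ρ' ρ ≤ specExp s z ρ ρ

/-- Strict truthfulness of the spectral score `S[ŝ]`. -/
def SpecStrictlyTruthful {n : ℕ} (s : (Fin n → ℝ) → Fin n → ℝ) : Prop :=
  SpecTruthful s ∧ ∀ ρ ∈ Dens n, ∀ ρ' ∈ Dens n, ∀ x z,
    IsSpecDecomp ρ' x → IsSpecDecomp ρ z →
    specExp s x ρ' ρ = specExp s z ρ ρ → ρ' = ρ

/-- Elicitability of a property of density matrices by a quantum score. -/
def ElicitableProp {n : ℕ} {R : Type*} (Γ : Mat n → R) : Prop :=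
  ∃ (m : ℕ) (s : R → Fin m → ℝ) (μ : R → Fin m → Mat n),
    (∀ r, IsPOVM (μ r)) ∧
    ∀ ρ ∈ Dens n, ∀ r, (∀ r', expScoreR s μ r' ρ ≤ expScoreR s μ r ρ) ↔ r = Γ ρ

/-- Identifiability of an ℝᵏ-valued property of density matrices. -/
def IdentifiableProp {n k : ℕ} (Γ : Mat n → (Fin k → ℝ)) : Prop :=
  ∃ V : (Fin k → ℝ) → Fin k → Mat n,
    ∀ r ∈ Γ '' (Dens n), (∀ i, (V r i).IsHermitian) ∧
      ∀ ρ ∈ Dens n, (Γ ρ = r ↔ ∀ i, hip (V r i) ρ = 0)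

/-- `Γ` is `k`-elicitable. -/
def KElicitable {n : ℕ} {R : Type*} (k : ℕ) (Γ : Mat n → R) : Prop :=
  ∃ (Γh : Mat n → (Fin k → ℝ)) (ψ : (Fin k → ℝ) → R),
    ElicitableProp Γh ∧ IdentifiableProp Γh ∧ ∀ ρ ∈ Dens n, Γ ρ = ψ (Γh ρ)

end

private lemma sum_stdBasis_diag {n : ℕ} :
    ∑ i : Fin n, Matrix.single i i (1:ℂ) = 1 := by
  ext a b
  by_cases h : a = b <;>
    simp [Matrix.sum_apply, Matrix.single, Matrix.one_apply, h, Finset.filter_eq',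
      Finset.filter_eq_empty_iff]

private lemma diagonal_eq_sum {n : ℕ} (f : Fin n → ℝ) :
    Matrix.diagonal (RCLike.ofReal ∘ f) =
      ∑ i : Fin n, ((f i : ℝ) : ℂ) • Matrix.single i i (1:ℂ) := by
  ext a b
  by_cases h : a = b <;>
    simp [Matrix.sum_apply, Matrix.single, Matrix.diagonal_apply, h, Finset.sum_ite_eq,
      and_comm, eq_comm]
  refine (Finset.sum_eq_zero fun x _ => ?_).symm
  rw [if_neg]; rintro ⟨rfl, rfl⟩; exact h rfl

private lemma stdBasis_diag_single {n : ℕ} (i : Fin n) :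
    Matrix.single i i (1:ℂ) = Matrix.diagonal (Pi.single i 1) := by
  ext a b
  simp [Matrix.single, Matrix.diagonal_apply, Pi.single_apply]
  aesop

private lemma stdBasis_herm {n : ℕ} (i : Fin n) :
    (Matrix.single i i (1:ℂ))ᴴ = Matrix.single i i 1 := by
  have hs : star (Pi.single i (1:ℂ)) = (Pi.single i 1 : Fin n → ℂ) := by
    funext j
    rw [Pi.star_apply, Pi.single_apply]
    split <;> simp
  rw [stdBasis_diag_single, Matrix.diagonal_conjTranspose, hs]

private lemma hip_sum_smul {n : ℕ} {ι : Type*} [Fintype ι] (c : ι → ℝ) (A : ι → Mat n)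
    (B : Mat n) : hip (∑ i, ((c i : ℝ) : ℂ) • A i) B = ∑ i, c i * hip (A i) B := by
  simp [hip, Finset.sum_mul, Matrix.smul_mul, Matrix.trace_sum, Matrix.trace_smul,
    Complex.re_sum]

/-- projective quantum scores can express all finite quantum
scores. -/
theorem projective_expressive {n : ℕ} {Y : Type*} [Fintype Y]
    (s : Mat n → Y → ℝ) (μ : Mat n → Y → Mat n)
    (hμ : ∀ ρ' ∈ Dens n, IsPOVM (μ ρ')) :
    ∃ (m : ℕ) (s' : Mat n → Fin m → ℝ) (μ' : Mat n → Fin m → Mat n),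
      (∀ ρ' ∈ Dens n, IsPVM (μ' ρ')) ∧
      ∀ ρ' ∈ Dens n, ∀ ρ ∈ Dens n,
        expScoreR s' μ' ρ' ρ = expScoreR s μ ρ' ρ := by
  classical
  set A : Mat n → Mat n := fun ρ' => ∑ y, ((s ρ' y : ℝ) : ℂ) • μ ρ' y with hAdef
  have hherm : ∀ ρ' ∈ Dens n, (A ρ').IsHermitian := by
    intro ρ' hρ'
    have hy : ∀ y, (μ ρ' y).IsHermitian := fun y => ((hμ ρ' hρ').1 y).1
    show (A ρ')ᴴ = A ρ'
    simp only [hAdef, Matrix.conjTranspose_sum, Matrix.conjTranspose_smul]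
    refine Finset.sum_congr rfl fun y _ => ?_
    rw [(hy y).eq, Complex.star_def, Complex.conj_ofReal]
  refine ⟨n,
    (fun ρ' i => if h : (A ρ').IsHermitian then h.eigenvalues i else 0),
    (fun ρ' i => if h : (A ρ').IsHermitian then
        (h.eigenvectorUnitary : Mat n) * Matrix.single i i 1 *
          star (h.eigenvectorUnitary : Mat n)
      else 0), ?_, ?_⟩
  · intro ρ' hρ'
    have h := hherm ρ' hρ'
    simp only [dif_pos h]
    set U : Mat n := (h.eigenvectorUnitary : Mat n) with hU
    have hU1 : U * star U = 1 := Matrix.mem_unitaryGroup_iff.mp h.eigenvectorUnitary.2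
    have hU2 : star U * U = 1 := Matrix.mem_unitaryGroup_iff'.mp h.eigenvectorUnitary.2
    have key : ∀ i j : Fin n,
        (U * Matrix.single i i 1 * star U) * (U * Matrix.single j j 1 * star U)
          = U * (Matrix.single i i 1 * Matrix.single j j 1) * star U := by
      intro i j
      simp only [Matrix.mul_assoc]
      rw [← Matrix.mul_assoc (star U) U, hU2, Matrix.one_mul]
    refine ⟨⟨fun i => ?_, ?_⟩, fun i => ⟨?_, ?_⟩, fun i j hij => ?_⟩
    · show (U * Matrix.single i i 1 * star U).PosSemidef
      rw [stdBasis_diag_single, Matrix.star_eq_conjTranspose]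
      exact (Matrix.posSemidef_diagonal_iff.mpr fun j => by
        rw [Pi.single_apply]; split <;> simp).mul_mul_conjTranspose_same U
    · show ∑ i : Fin n, U * Matrix.single i i 1 * star U = 1
      rw [← Finset.sum_mul, ← Matrix.mul_sum, sum_stdBasis_diag, Matrix.mul_one, hU1]
    · show (U * Matrix.single i i 1 * star U).IsHermitian
      show _ = _
      simp [Matrix.conjTranspose_mul, Matrix.star_eq_conjTranspose, Matrix.mul_assoc,
        stdBasis_herm]
    · show (U * Matrix.single i i 1 * star U) * (U * Matrix.single i i 1 * star U)
          = U * Matrix.single i i 1 * star U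
      rw [key, Matrix.single_mul_single_same, mul_one]
    · show (U * Matrix.single i i 1 * star U) * (U * Matrix.single j j 1 * star U)
          = 0
      rw [key]
      simp [Matrix.single_mul_single_of_ne, hij]
  · intro ρ' hρ' ρ hρ
    have h := hherm ρ' hρ'
    set U : Mat n := (h.eigenvectorUnitary : Mat n) with hU
    have spec : ∑ i : Fin n, ((h.eigenvalues i : ℝ) : ℂ) •
        (U * Matrix.single i i 1 * star U) = A ρ' := by
      have : ∀ i : Fin n, ((h.eigenvalues i : ℝ) : ℂ) •
          (U * Matrix.single i i 1 * star U)
          = U * (((h.eigenvalues i : ℝ) : ℂ) • Matrix.single i i 1) * star U := by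
        intro i
        rw [Matrix.mul_smul, Matrix.smul_mul]
      rw [Finset.sum_congr rfl fun i _ => this i, ← Finset.sum_mul, ← Matrix.mul_sum,
        ← diagonal_eq_sum]
      exact (h.spectral_theorem).symm
    simp only [expScoreR, dif_pos h]
    calc ∑ i : Fin n, hip (U * Matrix.single i i 1 * star U) ρ * h.eigenvalues i
        = ∑ i : Fin n, h.eigenvalues i * hip (U * Matrix.single i i 1 * star U) ρ := by
          simp [mul_comm]
      _ = hip (A ρ') ρ := by rw [← hip_sum_smul, spec]
      _ = ∑ y, hip (μ ρ' y) ρ * s ρ' y := by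
          rw [hAdef]
          simp only [hip_sum_smul]
          exact Finset.sum_congr rfl fun y _ => mul_comm _ _
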